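/- The Schwartz–Bruhat space is stable under the p-adic Moyal product: for every θ ∈ ℚ_p \ {0} and all f₁, f₂ ∈ 𝒟(ℚ_p^{2d}), the double integral defining (f₁ ⋆_θ f₂)(X) is absolutely convergent for every X, and the resulting function f₁ ⋆_θ f₂ : ℚ_p^{2d} → ℂ is again locally constant with compact support. -/

import Mathlib

open MeasureTheory Complex

noncomputable section

variable {p : ℕ} [Fact p.Prime]

/-- Borel measurable structure on the `p`-adic numbers. -/
instance : MeasurableSpace ℚ_[p] := borel _
instance : BorelSpace ℚ_[p] := ⟨rfl⟩

/-- The `p`-adic phase space `ℚ_p^d × ℚ_p^d  (= ℚ_p^{2d})`. -/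
abbrev PadicPhase (p : ℕ) [Fact p.Prime] (d : ℕ) : Type :=
  (Fin d → ℚ_[p]) × (Fin d → ℚ_[p])

/-- `μ₀(X) = max {1, max_i |x_i|_p, max_i |ξ_i|_p}` (the Pi-norm is the sup-norm). -/
def mu0 {d : ℕ} (X : PadicPhase p d) : ℝ := max 1 (max ‖X.1‖ ‖X.2‖)

/-- The standard symplectic form `[X,Y] = ⟨y,ξ⟩ − ⟨x,η⟩` for `X = (x,ξ)`, `Y = (y,η)`. -/
def symp {d : ℕ} (X Y : PadicPhase p d) : ℚ_[p] :=
  (∑ i, Y.1 i * X.2 i) - (∑ i, X.1 i * Y.2 i)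

/-- `ψ : ℚ_p → ℂ` is a continuous additive character of modulus one, trivial on `ℤ_p`
but nontrivial on `p⁻¹ℤ_p` (i.e. of conductor `ℤ_p`). -/
structure IsStdChar (p : ℕ) [Fact p.Prime] (ψ : ℚ_[p] → ℂ) : Prop where
  continuous : Continuous ψ
  map_add : ∀ x y : ℚ_[p], ψ (x + y) = ψ x * ψ y
  norm_one : ∀ x : ℚ_[p], ‖ψ x‖ = 1
  trivial_on_int : ∀ x : ℚ_[p], ‖x‖ ≤ 1 → ψ x = 1
  nontrivial : ∃ x : ℚ_[p], ‖x‖ ≤ (p : ℝ) ∧ ψ x ≠ 1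

/-- The `p`-adic Moyal product
`(f₁ ⋆_θ f₂)(X) = |θ|_p^{-2d} ∫∫ ψ(−(2/θ)[Y−X, Z−X]) f₁(Y) f₂(Z) dY dZ`. -/
def moyal {p : ℕ} [Fact p.Prime] {d : ℕ} (μ : Measure (PadicPhase p d))
    (ψ : ℚ_[p] → ℂ) (θ : ℚ_[p]) (f₁ f₂ : PadicPhase p d → ℂ)
    (X : PadicPhase p d) : ℂ :=
  (((‖θ‖ ^ (2 * d))⁻¹ : ℝ) : ℂ) *
    ∫ YZ : PadicPhase p d × PadicPhase p d,
      ψ (-(2 / θ) * symp (YZ.1 - X) (YZ.2 - X)) * f₁ YZ.1 * f₂ YZ.2 ∂(μ.prod μ)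

/-! ### Auxiliary lemmas -/

instance moyalAux.ultraPi {d : ℕ} : IsUltrametricDist (Fin d → ℚ_[p]) := by
  constructor
  intro x y z
  refine dist_pi_le_iff (le_max_iff.2 (Or.inl dist_nonneg)) |>.2 fun i => ?_
  exact (IsUltrametricDist.dist_triangle_max (x i) (y i) (z i)).trans
    (max_le_max (dist_le_pi_dist x y i) (dist_le_pi_dist y z i))

instance moyalAux.ultraProd {d : ℕ} : IsUltrametricDist (PadicPhase p d) := by
  constructor
  intro x y z
  simp only [Prod.dist_eq]
  exact max_le
    ((IsUltrametricDist.dist_triangle_max _ _ _).trans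
      (max_le_max (le_max_left _ _) (le_max_left _ _)))
    ((IsUltrametricDist.dist_triangle_max _ _ _).trans
      (max_le_max (le_max_right _ _) (le_max_right _ _)))

lemma moyalAux.norm_sub_le_max {E : Type*} [SeminormedAddCommGroup E] [IsUltrametricDist E]
    (a b : E) : ‖a - b‖ ≤ max ‖a‖ ‖b‖ := by
  rw [sub_eq_add_neg]
  exact (IsUltrametricDist.norm_add_le_max a (-b)).trans (by rw [norm_neg])

lemma moyalAux.norm_sub_eq_of_lt {E : Type*} [SeminormedAddCommGroup E] [IsUltrametricDist E]
    {a b : E} (h : ‖a‖ < ‖b‖) : ‖a - b‖ = ‖b‖ := by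
  rw [sub_eq_add_neg,
    IsUltrametricDist.norm_add_eq_max_of_norm_ne_norm (by rw [norm_neg]; exact h.ne), norm_neg]
  exact max_eq_right h.le

lemma moyalAux.symp_sub_sub {d : ℕ} (A B W : PadicPhase p d) :
    symp (A - W) (B - W) = symp A B + symp W (A - B) := by
  simp only [symp, Prod.fst_sub, Prod.snd_sub, Pi.sub_apply, sub_mul, mul_sub,
    Finset.sum_sub_distrib]
  ring

lemma moyalAux.symp_add_right {d : ℕ} (X Y W : PadicPhase p d) :
    symp X (Y + W) = symp X Y + symp X W := by
  simp only [symp, Prod.fst_add, Prod.snd_add, Pi.add_apply, add_mul, mul_add,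
    Finset.sum_add_distrib]
  ring

lemma moyalAux.norm_symp_le {d : ℕ} (A B : PadicPhase p d) : ‖symp A B‖ ≤ ‖A‖ * ‖B‖ := by
  have h1 : ‖∑ i, B.1 i * A.2 i‖ ≤ ‖A‖ * ‖B‖ := by
    apply IsUltrametricDist.norm_sum_le_of_forall_le_of_nonneg
      (mul_nonneg (norm_nonneg _) (norm_nonneg _))
    intro i _
    rw [norm_mul, mul_comm]
    exact mul_le_mul ((norm_le_pi_norm _ i).trans (norm_snd_le A))
      ((norm_le_pi_norm _ i).trans (norm_fst_le B)) (norm_nonneg _) (norm_nonneg _)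
  have h2 : ‖∑ i, A.1 i * B.2 i‖ ≤ ‖A‖ * ‖B‖ := by
    apply IsUltrametricDist.norm_sum_le_of_forall_le_of_nonneg
      (mul_nonneg (norm_nonneg _) (norm_nonneg _))
    intro i _
    rw [norm_mul]
    exact mul_le_mul ((norm_le_pi_norm _ i).trans (norm_fst_le A))
      ((norm_le_pi_norm _ i).trans (norm_snd_le B)) (norm_nonneg _) (norm_nonneg _)
  exact (moyalAux.norm_sub_le_max _ _).trans (max_le h1 h2)

/-- A locally constant compactly supported function on an ultrametric space is uniformly
locally constant. -/
lemma moyalAux.unif_const {E : Type*} [MetricSpace E] [IsUltrametricDist E] (f : E → ℂ)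
    (hf : IsLocallyConstant f) (hf' : HasCompactSupport f) :
    ∃ δ : ℝ, 0 < δ ∧ ∀ x y : E, dist x y ≤ δ → f x = f y := by
  have key : ∀ x : E, ∃ r : ℝ, 0 < r ∧ ∀ y ∈ Metric.closedBall x r, f y = f x := by
    intro x
    obtain ⟨U, hU, hxU, hfU⟩ := hf.exists_open x
    obtain ⟨r, hr, hball⟩ := (Metric.isOpen_iff.1 hU) x hxU
    exact ⟨r / 2, by linarith, fun y hy => hfU y (hball (Metric.mem_ball.2
      (lt_of_le_of_lt (Metric.mem_closedBall.1 hy) (by linarith))))⟩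
  choose r hr hfr using key
  obtain ⟨s, hs⟩ := hf'.elim_finite_subcover (fun x : E => Metric.ball x (r x))
    (fun x => Metric.isOpen_ball) (fun x _ => Set.mem_iUnion.2 ⟨x, Metric.mem_ball_self (hr x)⟩)
  rcases s.eq_empty_or_nonempty with hse | hse
  · refine ⟨1, one_pos, fun x y _ => ?_⟩
    have hx : f x = 0 := by
      by_contra h
      have := hs (subset_tsupport f (by simpa [Function.mem_support] using h))
      simp [hse] at this
    have hy : f y = 0 := by
      by_contra h
      have := hs (subset_tsupport f (by simpa [Function.mem_support] using h))
      simp [hse] at this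
    rw [hx, hy]
  · refine ⟨s.inf' hse r, Finset.lt_inf'_iff hse |>.2 fun i _ => hr i, ?_⟩
    have hδ : ∀ i ∈ s, s.inf' hse r ≤ r i := fun i hi => Finset.inf'_le r hi
    have main : ∀ x y : E, dist x y ≤ s.inf' hse r → x ∈ tsupport f → f x = f y := by
      intro x y hxy hx
      obtain ⟨i, hi, hxi⟩ := Set.mem_iUnion₂.1 (hs hx)
      have hxi' : x ∈ Metric.closedBall i (r i) := Metric.ball_subset_closedBall hxi
      have hyi : y ∈ Metric.closedBall i (r i) := by
        rw [Metric.mem_closedBall] at *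
        refine (IsUltrametricDist.dist_triangle_max y x i).trans (max_le ?_ hxi')
        exact le_trans (by rwa [dist_comm]) (hδ i hi)
      rw [hfr i x hxi', hfr i y hyi]
    intro x y hxy
    by_cases hx : x ∈ tsupport f
    · exact main x y hxy hx
    by_cases hy : y ∈ tsupport f
    · exact (main y x (by rwa [dist_comm]) hy).symm
    · rw [image_eq_zero_of_notMem_tsupport hx, image_eq_zero_of_notMem_tsupport hy]

lemma moyalAux.pi_norm_attained {d : ℕ} (hd : 1 ≤ d) (f : Fin d → ℚ_[p]) :
    ∃ j, ‖f j‖ = ‖f‖ := by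
  have hne : (Finset.univ : Finset (Fin d)).Nonempty := by
    simpa [Finset.univ_nonempty_iff] using Fin.pos_iff_nonempty.mp hd
  obtain ⟨j, _, hj⟩ := Finset.exists_mem_eq_sup Finset.univ hne (fun i => ‖f i‖₊)
  exact ⟨j, by rw [Pi.norm_def, hj]; rfl⟩

/-- The Schwartz–Bruhat space is stable under the `p`-adic Moyal product: the defining
double integral is absolutely convergent at every point, and `f₁ ⋆_θ f₂` is again
locally constant with compact support. -/
theorem moyal_schwartzBruhat_stable {p : ℕ} [Fact p.Prime] (hp : Odd p)
    {d : ℕ} (hd : 1 ≤ d)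
    (μ : Measure (PadicPhase p d)) [μ.IsAddHaarMeasure]
    (hμ : μ {X : PadicPhase p d | ‖X.1‖ ≤ 1 ∧ ‖X.2‖ ≤ 1} = 1)
    (ψ : ℚ_[p] → ℂ) (hψ : IsStdChar p ψ)
    (θ : ℚ_[p]) (hθ : θ ≠ 0)
    (f₁ f₂ : PadicPhase p d → ℂ)
    (hf₁ : IsLocallyConstant f₁) (hf₁' : HasCompactSupport f₁)
    (hf₂ : IsLocallyConstant f₂) (hf₂' : HasCompactSupport f₂) :
    (∀ X : PadicPhase p d,
      Integrable
        (fun YZ : PadicPhase p d × PadicPhase p d =>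
          ψ (-(2 / θ) * symp (YZ.1 - X) (YZ.2 - X)) * f₁ YZ.1 * f₂ YZ.2) (μ.prod μ)) ∧
    IsLocallyConstant (moyal μ ψ θ f₁ f₂) ∧
    HasCompactSupport (moyal μ ψ θ f₁ f₂) := by
  classical
  set c : ℚ_[p] := -(2 / θ) with hcdef
  have hc : c ≠ 0 := by
    simp only [hcdef, neg_ne_zero]
    exact div_ne_zero two_ne_zero hθ
  have hcnorm : 0 < ‖c‖ := norm_pos_iff.2 hc
  -- ψ(0) = 1
  have hψ0 : ψ 0 = 1 := hψ.trivial_on_int 0 (by simp)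
  have hψne : ∀ x : ℚ_[p], ψ x ≠ 0 := fun x h => by
    have := hψ.norm_one x; rw [h, norm_zero] at this; norm_num at this
  -- Integrability
  have hcont : ∀ X : PadicPhase p d, Continuous
      (fun YZ : PadicPhase p d × PadicPhase p d =>
        ψ (c * symp (YZ.1 - X) (YZ.2 - X)) * f₁ YZ.1 * f₂ YZ.2) := by
    intro X
    apply Continuous.mul
    apply Continuous.mul
    · exact hψ.continuous.comp (by unfold symp; fun_prop)
    · exact hf₁.continuous.comp continuous_fst
    · exact hf₂.continuous.comp continuous_snd
  have hsupp : ∀ X : PadicPhase p d, HasCompactSupport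
      (fun YZ : PadicPhase p d × PadicPhase p d =>
        ψ (c * symp (YZ.1 - X) (YZ.2 - X)) * f₁ YZ.1 * f₂ YZ.2) := by
    intro X
    apply HasCompactSupport.intro (hf₁'.prod hf₂')
    intro YZ hYZ
    rw [Set.mem_prod, not_and_or] at hYZ
    rcases hYZ with h | h
    · rw [image_eq_zero_of_notMem_tsupport h, mul_zero, zero_mul]
    · rw [image_eq_zero_of_notMem_tsupport h, mul_zero]
  have hint : ∀ X : PadicPhase p d, Integrable
      (fun YZ : PadicPhase p d × PadicPhase p d =>
        ψ (c * symp (YZ.1 - X) (YZ.2 - X)) * f₁ YZ.1 * f₂ YZ.2) (μ.prod μ) := fun X =>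
    (hcont X).integrable_of_hasCompactSupport (hsupp X)
  -- support bounds
  obtain ⟨r₁, hr₁⟩ := hf₁'.isBounded.subset_closedBall 0
  obtain ⟨r₂, hr₂⟩ := hf₂'.isBounded.subset_closedBall 0
  set R : ℝ := max 1 (max r₁ r₂) with hRdef
  have hR1 : (1 : ℝ) ≤ R := le_max_left _ _
  have hRpos : (0 : ℝ) < R := lt_of_lt_of_le one_pos hR1
  have hsupp₁ : ∀ Y : PadicPhase p d, f₁ Y ≠ 0 → ‖Y‖ ≤ R := by
    intro Y hY
    have : Y ∈ Metric.closedBall 0 r₁ := hr₁ (subset_tsupport f₁ hY)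
    rw [Metric.mem_closedBall, dist_zero_right] at this
    exact this.trans ((le_max_left _ _).trans (le_max_right _ _))
  have hsupp₂ : ∀ Z : PadicPhase p d, f₂ Z ≠ 0 → ‖Z‖ ≤ R := by
    intro Z hZ
    have : Z ∈ Metric.closedBall 0 r₂ := hr₂ (subset_tsupport f₂ hZ)
    rw [Metric.mem_closedBall, dist_zero_right] at this
    exact this.trans ((le_max_right _ _).trans (le_max_right _ _))
  refine ⟨hint, ?_, ?_⟩
  -- Local constancy
  · rw [IsLocallyConstant.iff_exists_open]
    intro X
    set ε : ℝ := 1 / (‖c‖ * R) with hεdef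
    have hεpos : 0 < ε := by positivity
    refine ⟨Metric.ball X ε, Metric.isOpen_ball, Metric.mem_ball_self hεpos, fun X' hX' => ?_⟩
    have hW : ‖X' - X‖ ≤ ε := by
      rw [Metric.mem_ball, dist_eq_norm] at hX'; exact hX'.le
    unfold moyal
    rw [← hcdef]
    congr 1
    apply integral_congr_ae
    apply Filter.Eventually.of_forall
    intro YZ
    dsimp only
    by_cases h1 : f₁ YZ.1 = 0
    · rw [h1, mul_zero, zero_mul, mul_zero, zero_mul]
    by_cases h2 : f₂ YZ.2 = 0
    · rw [h2, mul_zero, mul_zero]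
    have hY : ‖YZ.1‖ ≤ R := hsupp₁ _ h1
    have hZ : ‖YZ.2‖ ≤ R := hsupp₂ _ h2
    have e1 : YZ.1 - X' = (YZ.1 - X) - (X' - X) := by abel
    have e2 : YZ.2 - X' = (YZ.2 - X) - (X' - X) := by abel
    have e3 : (YZ.1 - X) - (YZ.2 - X) = YZ.1 - YZ.2 := by abel
    rw [e1, e2, moyalAux.symp_sub_sub, e3, mul_add, hψ.map_add]
    have hsmall : ‖c * symp (X' - X) (YZ.1 - YZ.2)‖ ≤ 1 := by
      rw [norm_mul]
      have hYZ : ‖YZ.1 - YZ.2‖ ≤ R :=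
        (moyalAux.norm_sub_le_max _ _).trans (max_le hY hZ)
      have : ‖symp (X' - X) (YZ.1 - YZ.2)‖ ≤ ε * R :=
        (moyalAux.norm_symp_le _ _).trans
          (mul_le_mul hW hYZ (norm_nonneg _) hεpos.le)
      calc ‖c‖ * ‖symp (X' - X) (YZ.1 - YZ.2)‖ ≤ ‖c‖ * (ε * R) :=
            mul_le_mul_of_nonneg_left this (norm_nonneg _)
        _ = 1 := by
            rw [hεdef]; field_simp
    rw [hψ.trivial_on_int _ hsmall, mul_one]
  -- Compact support
  · obtain ⟨t, ht, htne⟩ := hψ.nontrivial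
    have htzero : t ≠ 0 := fun h => htne (h ▸ hψ0)
    obtain ⟨δ₂, hδ₂pos, hδ₂⟩ := moyalAux.unif_const f₂ hf₂ hf₂'
    set M : ℝ := max R ((p : ℝ) / (‖c‖ * δ₂)) with hMdef
    apply HasCompactSupport.intro (isCompact_closedBall (0 : PadicPhase p d) M)
    intro X hX
    have hXM : M < ‖X‖ := by
      by_contra h
      rw [not_lt] at h
      exact hX (Metric.mem_closedBall.2 (by rw [dist_zero_right]; exact h))
    have hXR : R < ‖X‖ := lt_of_le_of_lt (le_max_left _ _) hXM
    have hXp : (p : ℝ) / (‖c‖ * δ₂) < ‖X‖ := lt_of_le_of_lt (le_max_right _ _) hXM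
    have hXpos : 0 < ‖X‖ := lt_trans hRpos hXR
    unfold moyal
    rw [← hcdef, mul_eq_zero]
    right
    rw [MeasureTheory.integral_prod _ (hint X)]
    have hzero : ∀ Y : PadicPhase p d,
        (∫ Z, ψ (c * symp (Y - X) (Z - X)) * f₁ Y * f₂ Z ∂μ) = 0 := by
      intro Y
      by_cases hfY : f₁ Y = 0
      · simp [hfY]
      have hYR : ‖Y‖ ≤ R := hsupp₁ Y hfY
      set V : PadicPhase p d := Y - X with hVdef
      -- find a small shift w with c * symp V w = t
      have hppos : (0 : ℝ) < (p : ℝ) := by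
        exact_mod_cast (Fact.out : p.Prime).pos
      have hkey : ‖t‖ ≤ δ₂ * (‖c‖ * ‖X‖) := by
        refine ht.trans ?_
        calc (p : ℝ) ≤ ‖X‖ * (‖c‖ * δ₂) := by
              rw [div_lt_iff₀ (mul_pos hcnorm hδ₂pos)] at hXp
              exact hXp.le
          _ = δ₂ * (‖c‖ * ‖X‖) := by ring
      have hw : ∃ w : PadicPhase p d, ‖w‖ ≤ δ₂ ∧ c * symp V w = t := by
        rcases le_total ‖X.1‖ ‖X.2‖ with hside | hside
        · -- ‖X‖ = ‖X.2‖
          have hX2 : ‖X.2‖ = ‖X‖ := by rw [Prod.norm_def, max_eq_right hside]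
          obtain ⟨j, hj⟩ := moyalAux.pi_norm_attained hd X.2
          have hXj : ‖X.2 j‖ = ‖X‖ := by rw [hj, hX2]
          have hVj : ‖V.2 j‖ = ‖X‖ := by
            have hYj : ‖Y.2 j‖ < ‖X.2 j‖ := by
              rw [hXj]
              exact lt_of_le_of_lt ((norm_le_pi_norm _ j).trans
                ((norm_snd_le Y).trans hYR)) hXR
            have : V.2 j = Y.2 j - X.2 j := by rw [hVdef]; rfl
            rw [this, moyalAux.norm_sub_eq_of_lt hYj, hXj]
          have hVjne : V.2 j ≠ 0 := by
            intro h; rw [h, norm_zero] at hVj; exact absurd hVj.symm (ne_of_gt hXpos)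
          refine ⟨(Pi.single j (t / (c * V.2 j)), 0), ?_, ?_⟩
          · have hnorm : ‖((Pi.single j (t / (c * V.2 j)), 0) : PadicPhase p d)‖
                = ‖t‖ / (‖c‖ * ‖X‖) := by
              rw [Prod.norm_def, norm_zero, max_eq_left (norm_nonneg _), Pi.norm_single,
                norm_div, norm_mul, hVj]
            rw [hnorm, div_le_iff₀ (mul_pos hcnorm hXpos)]
            exact hkey
          · have hsympw : symp V (Pi.single j (t / (c * V.2 j)), 0)
                = t / (c * V.2 j) * V.2 j := by
              simp [symp, Pi.single_apply, ite_mul]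
            rw [hsympw]; field_simp
        · -- ‖X‖ = ‖X.1‖
          have hX1 : ‖X.1‖ = ‖X‖ := by rw [Prod.norm_def, max_eq_left hside]
          obtain ⟨j, hj⟩ := moyalAux.pi_norm_attained hd X.1
          have hXj : ‖X.1 j‖ = ‖X‖ := by rw [hj, hX1]
          have hVj : ‖V.1 j‖ = ‖X‖ := by
            have hYj : ‖Y.1 j‖ < ‖X.1 j‖ := by
              rw [hXj]
              exact lt_of_le_of_lt ((norm_le_pi_norm _ j).trans
                ((norm_fst_le Y).trans hYR)) hXR
            have : V.1 j = Y.1 j - X.1 j := by rw [hVdef]; rfl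
            rw [this, moyalAux.norm_sub_eq_of_lt hYj, hXj]
          have hVjne : V.1 j ≠ 0 := by
            intro h; rw [h, norm_zero] at hVj; exact absurd hVj.symm (ne_of_gt hXpos)
          refine ⟨(0, Pi.single j (-(t / (c * V.1 j)))), ?_, ?_⟩
          · have hnorm : ‖(((0 : Fin d → ℚ_[p]), Pi.single j (-(t / (c * V.1 j)))) : PadicPhase p d)‖
                = ‖t‖ / (‖c‖ * ‖X‖) := by
              rw [Prod.norm_def, norm_zero, max_eq_right (norm_nonneg _), Pi.norm_single,
                norm_neg, norm_div, norm_mul, hVj]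
            rw [hnorm, div_le_iff₀ (mul_pos hcnorm hXpos)]
            exact hkey
          · have hsympw : symp V ((0 : Fin d → ℚ_[p]), Pi.single j (-(t / (c * V.1 j))))
                = -(V.1 j * -(t / (c * V.1 j))) := by
              simp [symp, Pi.single_apply, mul_ite]
            rw [hsympw]; field_simp
      obtain ⟨w, hwnorm, hwsymp⟩ := hw
      set I : ℂ := ∫ Z, ψ (c * symp V (Z - X)) * f₁ Y * f₂ Z ∂μ with hIdef
      have hshift : I = ψ t * I := by
        calc I = ∫ Z, ψ (c * symp V (Z + w - X)) * f₁ Y * f₂ (Z + w) ∂μ :=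
              (integral_add_right_eq_self
                (fun Z => ψ (c * symp V (Z - X)) * f₁ Y * f₂ Z) w).symm
          _ = ∫ Z, ψ t * (ψ (c * symp V (Z - X)) * f₁ Y * f₂ Z) ∂μ := by
              apply integral_congr_ae
              apply Filter.Eventually.of_forall
              intro Z
              dsimp only
              have e4 : Z + w - X = (Z - X) + w := by abel
              have hf2 : f₂ (Z + w) = f₂ Z := by
                apply hδ₂
                rw [dist_eq_norm]
                simpa using hwnorm
              rw [e4, moyalAux.symp_add_right, mul_add, hψ.map_add, hwsymp, hf2]
              ring
          _ = ψ t * I := integral_const_mul _ _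
      have hfin : (1 - ψ t) * I = 0 := by
        rw [sub_mul, one_mul, ← hshift, sub_self]
      rcases mul_eq_zero.1 hfin with h | h
      · exact absurd (sub_eq_zero.1 h).symm htne
      · exact h
    calc (∫ Y, ∫ Z, ψ (c * symp ((Y, Z).1 - X) ((Y, Z).2 - X)) * f₁ (Y, Z).1 * f₂ (Y, Z).2 ∂μ ∂μ)
        = ∫ Y : PadicPhase p d, (0 : ℂ) ∂μ := by
          apply integral_congr_ae
          apply Filter.Eventually.of_forall
          intro Y
          exact hzero Y
      _ = 0 := integral_zero _ _
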